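/- Let A_i > 0 for i = 1,…,M, H > 0, p ∈ ℝ², w₀ ∈ ℝ². Define F_lb(w) = Σ_{i=1}^M exp( -[A_i/(‖w₀-p‖²+H²) - A_i/(‖w₀-p‖²+H²)² · (‖w-p‖² - ‖w₀-p‖²)] ). Then F_lb is convex on ℝ², and F_lb(w) ≥ Σ_{i=1}^M exp(-A_i/(‖w-p‖²+H²)) for all w, with equality at w = w₀. -/

import Mathlib

open Real

lemma exp_comp_convexOn {E : Type*} [AddCommMonoid E] [Module ℝ E] {f : E → ℝ}
    (hf : ConvexOn ℝ Set.univ f) : ConvexOn ℝ Set.univ (fun x => Real.exp (f x)) := by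
  refine ⟨convex_univ, fun x _ y _ a b ha hb hab => ?_⟩
  calc Real.exp (f (a • x + b • y)) ≤ Real.exp (a * f x + b * f y) := by
        exact Real.exp_le_exp.2 (by simpa using hf.2 (Set.mem_univ x) (Set.mem_univ y) ha hb hab)
    _ ≤ a * Real.exp (f x) + b * Real.exp (f y) := by
        simpa using convexOn_exp.2 (Set.mem_univ (f x)) (Set.mem_univ (f y)) ha hb hab

lemma convexOn_finset_sum {E ι : Type*} [AddCommMonoid E] [Module ℝ E]
    (s : Finset ι) (g : ι → E → ℝ) (h : ∀ i ∈ s, ConvexOn ℝ Set.univ (g i)) :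
    ConvexOn ℝ Set.univ (fun w => ∑ i ∈ s, g i w) := by
  induction s using Finset.cons_induction with
  | empty => simpa using convexOn_const (0 : ℝ) convex_univ
  | cons i s hi ih =>
      simp only [Finset.sum_cons]
      exact (h i (Finset.mem_cons_self i s)).add
        (ih fun j hj => h j (Finset.mem_cons_of_mem hj))

lemma convex_exp_quad {E : Type*} [NormedAddCommGroup E] [NormedSpace ℝ E]
    (p : E) (k b : ℝ) (hk : 0 ≤ k) :
    ConvexOn ℝ Set.univ (fun w => Real.exp (k * ‖w - p‖ ^ 2 + b)) := by
  have h2 : ConvexOn ℝ Set.univ (fun w : E => ‖w - p‖ ^ 2) := by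
    refine ⟨convex_univ, fun x _ y _ a b ha hb hab => ?_⟩
    have hp : (a : ℝ) • p + b • p = p := by rw [← add_smul, hab, one_smul]
    have hxy : a • x + b • y - p = a • (x - p) + b • (y - p) := by
      rw [smul_sub, smul_sub]
      nth_rewrite 1 [← hp]
      abel
    have hn : ‖a • x + b • y - p‖ ≤ a * ‖x - p‖ + b * ‖y - p‖ := by
      rw [hxy]
      refine (norm_add_le _ _).trans ?_
      rw [norm_smul, norm_smul, Real.norm_eq_abs, Real.norm_eq_abs,
        abs_of_nonneg ha, abs_of_nonneg hb]
    have hsq : ‖a • x + b • y - p‖ ^ 2 ≤ (a * ‖x - p‖ + b * ‖y - p‖) ^ 2 :=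
      pow_le_pow_left₀ (norm_nonneg _) hn 2
    simp only [smul_eq_mul]
    nlinarith [sq_nonneg (‖x - p‖ - ‖y - p‖), mul_nonneg ha hb]
  have h3 : ConvexOn ℝ Set.univ (fun w : E => k * ‖w - p‖ ^ 2 + b) := by
    have := (h2.smul hk).add_const b
    simpa [smul_eq_mul, Pi.add_def] using this
  exact exp_comp_convexOn h3

theorem stmt_4 (M : ℕ) (A : Fin M → ℝ) (hA : ∀ i, 0 < A i) (H : ℝ) (hH : 0 < H)
    (p w₀ : EuclideanSpace ℝ (Fin 2))
    (Flb : EuclideanSpace ℝ (Fin 2) → ℝ)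
    (hFlb : ∀ w, Flb w = ∑ i, Real.exp (-(A i / (‖w₀ - p‖ ^ 2 + H ^ 2) -
        A i / (‖w₀ - p‖ ^ 2 + H ^ 2) ^ 2 * (‖w - p‖ ^ 2 - ‖w₀ - p‖ ^ 2)))) :
    ConvexOn ℝ Set.univ Flb ∧
      (∀ w, Flb w ≥ ∑ i, Real.exp (-(A i / (‖w - p‖ ^ 2 + H ^ 2)))) ∧
      Flb w₀ = ∑ i, Real.exp (-(A i / (‖w₀ - p‖ ^ 2 + H ^ 2))) := by
  set c : ℝ := ‖w₀ - p‖ ^ 2 + H ^ 2 with hc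
  have hc0 : 0 < c := by positivity
  refine ⟨?_, ?_, ?_⟩
  · have heq : Flb = fun w => ∑ i, Real.exp
        (A i / c ^ 2 * ‖w - p‖ ^ 2 + (-(A i / c ^ 2 * ‖w₀ - p‖ ^ 2) - A i / c)) := by
      funext w
      rw [hFlb w]
      exact Finset.sum_congr rfl fun i _ => by congr 1; ring
    rw [heq]
    exact convexOn_finset_sum _ _ fun i _ =>
      convex_exp_quad p _ _ (div_nonneg (hA i).le (by positivity))
  · intro w
    rw [hFlb w, ge_iff_le]
    refine Finset.sum_le_sum fun i _ => Real.exp_le_exp.2 (neg_le_neg ?_)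
    set t : ℝ := ‖w - p‖ ^ 2 + H ^ 2 with ht
    have ht0 : 0 < t := by positivity
    have hdiff : A i / t - (A i / c - A i / c ^ 2 * (‖w - p‖ ^ 2 - ‖w₀ - p‖ ^ 2)) =
        A i * (t - c) ^ 2 / (c ^ 2 * t) := by
      have : ‖w - p‖ ^ 2 - ‖w₀ - p‖ ^ 2 = t - c := by rw [ht, hc]; ring
      rw [this]
      field_simp
      ring
    have hpos : 0 ≤ A i * (t - c) ^ 2 / (c ^ 2 * t) :=
      div_nonneg (mul_nonneg (hA i).le (sq_nonneg _)) (mul_pos (pow_pos hc0 2) ht0).le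
    linarith
  · rw [hFlb w₀]
    exact Finset.sum_congr rfl fun i _ => by rw [sub_self, mul_zero, sub_zero]
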